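/- arXiv:1103.4884 — 2 statements merged into one kernel-verified Lean document; each statement's English description precedes it below -/
import Mathlib

section
/- For all integers m, n ≥ 0, Σ_{l=0}^{m} (−1)^{l+m} · l! · S(m,l) · (l+1)^n = Σ_{j=0}^{min(m,n)} (j!)² · S(m+1, j+1) · S(n+1, j+1). -/
/-- The Stirling number of the second kind `S(m, l)`. -/
def stirling : ℕ → ℕ → ℕ
  | 0, 0 => 1
  | 0, _ + 1 => 0
  | _ + 1, 0 => 0
  | m + 1, l + 1 => (l + 1) * stirling m (l + 1) + stirling m l

theorem stirling_eq_zero : ∀ (a b : ℕ), a < b → stirling a b = 0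
  | 0, _ + 1, _ => rfl
  | a + 1, b + 1, h => by
      have h1 : a < b := Nat.lt_of_succ_lt_succ h
      simp [stirling, stirling_eq_zero a (b + 1) (Nat.lt_succ_of_lt h1),
        stirling_eq_zero a b h1]

theorem stirling_one : ∀ m : ℕ, stirling (m + 1) 1 = 1
  | 0 => rfl
  | m + 1 => by
      show 1 * stirling (m + 1) 1 + stirling (m + 1) 0 = 1
      simp [stirling_one m, show stirling (m + 1) 0 = 0 from rfl]

/-- `(l+1) · l^(j) = l^(j+1) + (j+1) · l^(j)` in choose form. -/
theorem pt1 (l j : ℕ) :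
    ((l : ℤ) + 1) * (j.factorial * l.choose j) =
      (j + 1).factorial * l.choose (j + 1) + (j + 1) * (j.factorial * l.choose j) := by
  rcases le_or_gt j l with h | h
  · have h2 : ((l.choose (j + 1) : ℤ)) * (j + 1) = (l.choose j : ℤ) * ((l : ℤ) - j) := by
      have h3 := Nat.choose_succ_right_eq l j
      zify [h] at h3
      linarith [h3]
    simp only [Nat.factorial_succ]
    push_cast
    linear_combination (-(j.factorial : ℤ)) * h2
  · simp [Nat.choose_eq_zero_of_lt h, Nat.choose_eq_zero_of_lt (h.trans (Nat.lt_succ_self j))]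

theorem pt2 (l j : ℕ) :
    ((l : ℤ) + 1) * (l + 1).choose (j + 1) =
      (j + 2) * l.choose (j + 1) + (j + 1) * l.choose j + l * l.choose (j + 1) := by
  have h1 := Nat.add_one_mul_choose_eq l j
  have h2 := Nat.choose_succ_succ l j
  zify at h1 h2
  linear_combination ((l : ℤ) + 1) * h2 + h1 + ((j : ℤ) + 1) * h2

/-- `(x+1)^n = Σ_j S(n+1, j+1) · j! · C(x, j)`. -/
theorem expand (n l : ℕ) :
    ((l : ℤ) + 1) ^ n =
      ∑ j ∈ Finset.range (n + 1),
        (stirling (n + 1) (j + 1) : ℤ) * (j.factorial * l.choose j) := by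
  induction n with
  | zero => simp [stirling]
  | succ n ih =>
      have step : ((l : ℤ) + 1) ^ (n + 1) =
          ∑ j ∈ Finset.range (n + 1), (stirling (n + 1) (j + 1) : ℤ) *
            ((j + 1).factorial * l.choose (j + 1) + (j + 1) * (j.factorial * l.choose j)) := by
        rw [pow_succ, ih, Finset.sum_mul]
        refine Finset.sum_congr rfl fun j _ => ?_
        rw [mul_assoc, mul_comm ((j.factorial : ℤ) * (l.choose j : ℤ)) (((l : ℤ) + 1)), pt1 l j,
          mul_add]
      rw [step]
      have target : ∑ j ∈ Finset.range (n + 2),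
            (stirling (n + 2) (j + 1) : ℤ) * (j.factorial * l.choose j) =
          (∑ j ∈ Finset.range (n + 2),
            ((j : ℤ) + 1) * stirling (n + 1) (j + 1) * (j.factorial * l.choose j)) +
          ∑ j ∈ Finset.range (n + 2),
            (stirling (n + 1) j : ℤ) * (j.factorial * l.choose j) := by
        rw [← Finset.sum_add_distrib]
        refine Finset.sum_congr rfl fun j _ => ?_
        rw [show stirling (n + 2) (j + 1) = (j + 1) * stirling (n + 1) (j + 1) + stirling (n + 1) j
          from rfl]
        push_cast
        ring
      rw [target]
      have left : ∑ j ∈ Finset.range (n + 2),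
            ((j : ℤ) + 1) * stirling (n + 1) (j + 1) * (j.factorial * l.choose j) =
          ∑ j ∈ Finset.range (n + 1),
            (stirling (n + 1) (j + 1) : ℤ) * ((j + 1) * (j.factorial * l.choose j)) := by
        rw [Finset.sum_range_succ, stirling_eq_zero (n + 1) (n + 2) (by omega)]
        simp only [Nat.cast_zero, mul_zero, zero_mul, add_zero]
        refine Finset.sum_congr rfl fun j _ => ?_
        ring
      have right : ∑ j ∈ Finset.range (n + 2),
            (stirling (n + 1) j : ℤ) * (j.factorial * l.choose j) =
          ∑ j ∈ Finset.range (n + 1),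
            (stirling (n + 1) (j + 1) : ℤ) * ((j + 1).factorial * l.choose (j + 1)) := by
        rw [Finset.sum_range_succ' (fun j => (stirling (n + 1) j : ℤ) *
          (j.factorial * l.choose j)) (n + 1)]
        rw [show stirling (n + 1) 0 = 0 from rfl]
        simp
      rw [Finset.sum_congr rfl (fun j _ => mul_add ((stirling (n + 1) (j + 1) : ℤ)) _ _),
        Finset.sum_add_distrib, left, right, add_comm]

/-- `Σ_l (−1)^{l+m} l! S(m,l) C(l,j) = j! S(m+1,j+1)`. -/
theorem key (m : ℕ) : ∀ j : ℕ,
    ∑ l ∈ Finset.range (m + 1),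
        (-1 : ℤ) ^ (l + m) * l.factorial * stirling m l * l.choose j =
      j.factorial * stirling (m + 1) (j + 1) := by
  induction m with
  | zero =>
      intro j
      cases j with
      | zero => simp [stirling]
      | succ j =>
          simp [stirling, Nat.choose_eq_zero_of_lt (Nat.succ_pos j),
            stirling_eq_zero 0 (j + 1) (Nat.succ_pos j)]
  | succ m ih =>
      intro j
      have e1 : ∑ l ∈ Finset.range (m + 2),
            (-1 : ℤ) ^ (l + (m + 1)) * l.factorial * stirling (m + 1) l * l.choose j =
          ∑ l ∈ Finset.range (m + 1),
            ((-1 : ℤ) ^ (l + m) * l.factorial * stirling m l * (((l : ℤ) + 1) * (l + 1).choose j)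
              + -((-1 : ℤ) ^ (l + 1 + m) * (l + 1) * (l + 1).factorial * stirling m (l + 1) *
                  (l + 1).choose j)) := by
        rw [Finset.sum_range_succ' (fun l =>
          (-1 : ℤ) ^ (l + (m + 1)) * l.factorial * stirling (m + 1) l * l.choose j) (m + 1)]
        rw [show stirling (m + 1) 0 = 0 from rfl]
        simp only [Nat.cast_zero, mul_zero, zero_mul, add_zero]
        refine Finset.sum_congr rfl fun l _ => ?_
        rw [show stirling (m + 1) (l + 1) = (l + 1) * stirling m (l + 1) + stirling m l from rfl]
        have hs : (-1 : ℤ) ^ (l + 1 + (m + 1)) = (-1 : ℤ) ^ (l + m) := by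
          rw [show l + 1 + (m + 1) = (l + m) + 2 by omega, pow_add]; ring
        have hs2 : (-1 : ℤ) ^ (l + 1 + m) = -(-1 : ℤ) ^ (l + m) := by
          rw [show l + 1 + m = (l + m) + 1 by omega, pow_succ]; ring
        rw [hs, hs2, Nat.factorial_succ]
        push_cast
        ring
      have e2 : ∑ l ∈ Finset.range (m + 1),
            -((-1 : ℤ) ^ (l + 1 + m) * (l + 1) * (l + 1).factorial * stirling m (l + 1) *
                (l + 1).choose j) =
          ∑ l ∈ Finset.range (m + 1),
            -((-1 : ℤ) ^ (l + m) * l * l.factorial * stirling m l * l.choose j) := by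
        have h0 := Finset.sum_range_succ'
          (fun l => -((-1 : ℤ) ^ (l + m) * l * l.factorial * stirling m l * l.choose j)) (m + 1)
        rw [Finset.sum_range_succ] at h0
        rw [stirling_eq_zero m (m + 1) (Nat.lt_succ_self m)] at h0
        simp only [Nat.cast_zero, Nat.cast_ofNat, mul_zero, zero_mul, neg_zero, add_zero,
          Nat.cast_add, Nat.cast_one] at h0
        rw [← h0]
      rw [e1, Finset.sum_add_distrib, e2, ← Finset.sum_add_distrib]
      cases j with
      | zero =>
          have e3 : ∑ l ∈ Finset.range (m + 1),
                ((-1 : ℤ) ^ (l + m) * l.factorial * stirling m l *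
                    (((l : ℤ) + 1) * (l + 1).choose 0)
                  + -((-1 : ℤ) ^ (l + m) * l * l.factorial * stirling m l * l.choose 0)) =
              ∑ l ∈ Finset.range (m + 1),
                (-1 : ℤ) ^ (l + m) * l.factorial * stirling m l * l.choose 0 := by
            refine Finset.sum_congr rfl fun l _ => ?_
            simp only [Nat.choose_zero_right, Nat.cast_one]
            ring
          rw [e3, ih 0, stirling_one, stirling_one]
      | succ j =>
          have e3 : ∑ l ∈ Finset.range (m + 1),
                ((-1 : ℤ) ^ (l + m) * l.factorial * stirling m l *
                    (((l : ℤ) + 1) * (l + 1).choose (j + 1))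
                  + -((-1 : ℤ) ^ (l + m) * l * l.factorial * stirling m l * l.choose (j + 1))) =
              ∑ l ∈ Finset.range (m + 1),
                (((j : ℤ) + 2) * ((-1 : ℤ) ^ (l + m) * l.factorial * stirling m l *
                    l.choose (j + 1))
                  + ((j : ℤ) + 1) * ((-1 : ℤ) ^ (l + m) * l.factorial * stirling m l *
                    l.choose j)) := by
            refine Finset.sum_congr rfl fun l _ => ?_
            have := pt2 l j
            linear_combination ((-1 : ℤ) ^ (l + m) * l.factorial * stirling m l) * this
          rw [e3, Finset.sum_add_distrib, ← Finset.mul_sum, ← Finset.mul_sum, ih (j + 1), ih j]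
          rw [show stirling (m + 2) (j + 2) = (j + 2) * stirling (m + 1) (j + 2) + stirling (m + 1) (j + 1)
            from rfl]
          simp only [Nat.factorial_succ]
          push_cast
          ring

/-- `Σ_{l=0}^{m} (−1)^{l+m} · l! · S(m,l) · (l+1)^n
  = Σ_{j=0}^{min(m,n)} (j!)² · S(m+1, j+1) · S(n+1, j+1)`. -/
theorem stirling_sum_identity (m n : ℕ) :
    ∑ l ∈ Finset.range (m + 1),
        (-1 : ℤ) ^ (l + m) * l.factorial * stirling m l * (l + 1) ^ n =
      ∑ j ∈ Finset.range (min m n + 1),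
        (j.factorial : ℤ) ^ 2 * stirling (m + 1) (j + 1) * stirling (n + 1) (j + 1) := by
  have main : ∑ l ∈ Finset.range (m + 1),
        (-1 : ℤ) ^ (l + m) * l.factorial * stirling m l * (l + 1) ^ n =
      ∑ j ∈ Finset.range (n + 1),
        (j.factorial : ℤ) ^ 2 * stirling (m + 1) (j + 1) * stirling (n + 1) (j + 1) := by
    calc ∑ l ∈ Finset.range (m + 1),
          (-1 : ℤ) ^ (l + m) * l.factorial * stirling m l * (l + 1) ^ n
        = ∑ l ∈ Finset.range (m + 1), ∑ j ∈ Finset.range (n + 1),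
            (stirling (n + 1) (j + 1) : ℤ) * j.factorial *
              ((-1 : ℤ) ^ (l + m) * l.factorial * stirling m l * l.choose j) := by
          refine Finset.sum_congr rfl fun l _ => ?_
          rw [expand n l, Finset.mul_sum]
          refine Finset.sum_congr rfl fun j _ => ?_
          ring
      _ = ∑ j ∈ Finset.range (n + 1),
            (stirling (n + 1) (j + 1) : ℤ) * j.factorial *
              ∑ l ∈ Finset.range (m + 1),
                ((-1 : ℤ) ^ (l + m) * l.factorial * stirling m l * l.choose j) := by
          rw [Finset.sum_comm]
          exact Finset.sum_congr rfl fun j _ => (Finset.mul_sum _ _ _).symm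
      _ = ∑ j ∈ Finset.range (n + 1),
            (j.factorial : ℤ) ^ 2 * stirling (m + 1) (j + 1) * stirling (n + 1) (j + 1) := by
          refine Finset.sum_congr rfl fun j _ => ?_
          rw [key m j]
          ring
  rw [main]
  rcases le_or_gt n m with h | h
  · rw [min_eq_right h]
  · rw [min_eq_left h.le]
    rw [← Finset.sum_subset (Finset.range_subset_range.mpr (by omega : m + 1 ≤ n + 1))]
    intro j _ hj
    rw [Finset.mem_range, not_lt] at hj
    rw [stirling_eq_zero (m + 1) (j + 1) (by omega)]
    simp
end

section
/- Let q ≥ 2. If a q-ary m×n matrix M contains a cycle, then M is not a weak lonesum matrix. -/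
/-- A `q`-ary `m×n` matrix `M` is a weak lonesum matrix if it is uniquely determined
by the structure vectors of its rows and columns (the structure vector of a vector
records, for each value `v`, the number of coordinates equal to `v`). -/
def IsWeakLonesum {q m n : ℕ} (M : Fin m → Fin n → Fin q) : Prop :=
  ∀ N : Fin m → Fin n → Fin q,
    (∀ (i : Fin m) (v : Fin q),
      (Finset.univ.filter fun j => N i j = v).card =
        (Finset.univ.filter fun j => M i j = v).card) →
    (∀ (j : Fin n) (v : Fin q),
      (Finset.univ.filter fun i => N i j = v).card =
        (Finset.univ.filter fun i => M i j = v).card) →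
    N = M

/-- `p 0, p 1, …, p (k-1)` is a cycle of length `k` in `M`: the positions are
pairwise distinct; consecutive positions (cyclically, corresponding to the appended
sequence of length `k+2`) share a row or a column; no three consecutive positions
(cyclically) share a row, nor a column; and the entries along the extended sequence
of length `k+2` alternate between two distinct values `a, b`. -/
def IsCycle {q m n : ℕ} (M : Fin m → Fin n → Fin q) (k : ℕ) (p : ℕ → Fin m × Fin n) : Prop :=
  0 < k ∧
  (∀ l1 l2, l1 < k → l2 < k → p l1 = p l2 → l1 = l2) ∧
  (∀ l, l < k → ((p l).1 = (p ((l + 1) % k)).1 ∨ (p l).2 = (p ((l + 1) % k)).2)) ∧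
  (∀ l, l < k → ¬((p l).1 = (p ((l + 1) % k)).1 ∧ (p ((l + 1) % k)).1 = (p ((l + 2) % k)).1)) ∧
  (∀ l, l < k → ¬((p l).2 = (p ((l + 1) % k)).2 ∧ (p ((l + 1) % k)).2 = (p ((l + 2) % k)).2)) ∧
  (∃ a b : Fin q, a ≠ b ∧
    ∀ l, l < k + 2 → M (p (l % k)).1 (p (l % k)).2 = if Even l then a else b)

lemma exists_partner {α : Sort*} {k : ℕ} (hk2 : 2 ≤ k) (hEk : Even k)
    (R : ℕ → Prop) (u : ℕ → α)
    (hRmod : ∀ l, R (l % k) ↔ R l)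
    (halt : ∀ l, R (l + 1) ↔ ¬ R l)
    (hu : ∀ l, R l → u (l % k) = u ((l + 1) % k)) :
    ∃ f : ℕ → ℕ, ∀ l, l < k →
      f l < k ∧ u (f l) = u (l % k) ∧ (Even (f l) ↔ Even (l + 1)) ∧ f (f l) = l := by
  classical
  have hk0 : 0 < k := by omega
  have hmodlt : ∀ x : ℕ, x % k < k := fun x => Nat.mod_lt x hk0
  have hRk : ∀ l, R (l + k) ↔ R l := by
    intro l
    rw [← hRmod (l + k), ← hRmod l, Nat.add_mod_right]
  have hpar : ∀ x : ℕ, (Even (x % k) ↔ Even x) := by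
    intro x
    have h2 : Even (k * (x / k)) := hEk.mul_right _
    conv_rhs => rw [← Nat.div_add_mod x k]
    rw [Nat.even_add]
    tauto
  set f : ℕ → ℕ := fun l => if R l then (l + 1) % k else (l + k - 1) % k with hfdef
  have hfR : ∀ l, R l → f l = (l + 1) % k := fun l h => if_pos h
  have hfN : ∀ l, ¬ R l → f l = (l + k - 1) % k := fun l h => if_neg h
  refine ⟨f, fun l hl => ?_⟩
  have hlk : l % k = l := Nat.mod_eq_of_lt hl
  by_cases hR : R l
  · have hfl := hfR l hR
    refine ⟨by rw [hfl]; exact hmodlt _, by rw [hfl]; exact (hu l hR).symm,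
      by rw [hfl]; exact hpar _, ?_⟩
    have hnR : ¬ R (f l) := by
      rw [hfl, hRmod, halt]
      exact not_not_intro hR
    rw [hfN _ hnR, hfl]
    have e1 : (l + 1) % k + k - 1 = (l + 1) % k + (k - 1) := by omega
    rw [e1, Nat.mod_add_mod]
    have e2 : l + 1 + (k - 1) = l + k := by omega
    rw [e2, Nat.add_mod_right, hlk]
  · have hR1 : R (l + k - 1) := by
      have h1 := halt (l + k - 1)
      have e : l + k - 1 + 1 = l + k := by omega
      rw [e, hRk] at h1
      tauto
    have hfl := hfN l hR
    refine ⟨by rw [hfl]; exact hmodlt _, ?_, ?_, ?_⟩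
    · have := hu (l + k - 1) hR1
      have e : l + k - 1 + 1 = l + k := by omega
      rw [e, Nat.add_mod_right] at this
      rw [hfl, this]
    · rw [hfl, hpar, Nat.even_iff, Nat.even_iff]
      obtain ⟨t, ht⟩ := hEk
      omega
    · have hRf : R (f l) := by
        rw [hfl, hRmod]; exact hR1
      rw [hfR _ hRf, hfl, Nat.mod_add_mod]
      have e : l + k - 1 + 1 = l + k := by omega
      rw [e, Nat.add_mod_right, hlk]

/-- For `q ≥ 2`, a `q`-ary matrix containing a cycle is not a weak lonesum matrix. -/
theorem not_weakLonesum_of_cycle (q m n k : ℕ) (hq : 2 ≤ q)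
    (M : Fin m → Fin n → Fin q) (p : ℕ → Fin m × Fin n) (hc : IsCycle M k p) :
    ¬ IsWeakLonesum M := by
  classical
  obtain ⟨hk, hinj, hshare, hrow3, hcol3, a, b, hab, hval⟩ := hc
  intro hw
  have hmodlt : ∀ x : ℕ, x % k < k := fun x => Nat.mod_lt x hk
  have hEk : Even k := by
    by_contra h
    have h0 := hval 0 (by omega)
    have hkk := hval k (by omega)
    rw [Nat.mod_self] at hkk
    rw [Nat.zero_mod] at h0
    rw [if_pos Even.zero] at h0
    rw [if_neg h] at hkk
    exact hab (h0.symm.trans hkk)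
  have hk2 : 2 ≤ k := by obtain ⟨t, ht⟩ := hEk; omega
  have Mval : ∀ l, l < k → M (p l).1 (p l).2 = if Even l then a else b := by
    intro l hl
    have := hval l (by omega)
    rwa [Nat.mod_eq_of_lt hl] at this
  set R : ℕ → Prop := fun l => (p (l % k)).1 = (p ((l + 1) % k)).1 with hRdef
  set C : ℕ → Prop := fun l => (p (l % k)).2 = (p ((l + 1) % k)).2 with hCdef
  have hRmod : ∀ l, R (l % k) ↔ R l := by
    intro l
    simp only [hRdef]
    rw [Nat.mod_mod_of_dvd l (dvd_refl k), Nat.mod_add_mod]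
  have hCmod : ∀ l, C (l % k) ↔ C l := by
    intro l
    simp only [hCdef]
    rw [Nat.mod_mod_of_dvd l (dvd_refl k), Nat.mod_add_mod]
  have hRC : ∀ l, R l ∨ C l := by
    intro l
    have := hshare (l % k) (hmodlt l)
    simpa only [hRdef, hCdef, Nat.mod_add_mod] using this
  have hnotboth : ∀ l, ¬ (R l ∧ C l) := by
    rintro l ⟨h1, h2⟩
    simp only [hRdef] at h1
    simp only [hCdef] at h2
    have hpe : p (l % k) = p ((l + 1) % k) := Prod.ext h1 h2
    have heq := hinj _ _ (hmodlt l) (hmodlt (l + 1)) hpe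
    rcases Nat.lt_or_ge (l % k + 1) k with h | h
    · rw [← Nat.mod_add_mod, Nat.mod_eq_of_lt h] at heq; omega
    · have h3 : l % k + 1 = k := by have := hmodlt l; omega
      rw [← Nat.mod_add_mod, h3, Nat.mod_self] at heq
      have := hmodlt l; omega
  have hRalt : ∀ l, R (l + 1) ↔ ¬ R l := by
    intro l
    constructor
    · intro h1 h0
      have h3 := hrow3 (l % k) (hmodlt l)
      simp only [Nat.mod_add_mod] at h3
      simp only [hRdef] at h0 h1
      exact h3 ⟨h0, h1⟩
    · intro h0
      have hcl : C l := (hRC l).resolve_left h0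
      have h3 := hcol3 (l % k) (hmodlt l)
      simp only [Nat.mod_add_mod] at h3
      have hc1 : ¬ C (l + 1) := by
        intro hc1
        simp only [hCdef] at hcl hc1
        exact h3 ⟨hcl, hc1⟩
      exact (hRC (l + 1)).resolve_right hc1
  have hCalt : ∀ l, C (l + 1) ↔ ¬ C l := by
    intro l
    constructor
    · intro h1 h0
      have h3 := hcol3 (l % k) (hmodlt l)
      simp only [Nat.mod_add_mod] at h3
      simp only [hCdef] at h0 h1
      exact h3 ⟨h0, h1⟩
    · intro h0
      have hrl : R l := (hRC l).resolve_right h0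
      have hr1 : ¬ R (l + 1) := fun h => (hRalt l).mp h hrl
      exact (hRC (l + 1)).resolve_left hr1
  obtain ⟨f, hf⟩ := exists_partner hk2 hEk R (fun l => (p l).1) hRmod hRalt
    (fun l h => by simpa only [hRdef] using h)
  obtain ⟨g, hg⟩ := exists_partner hk2 hEk C (fun l => (p l).2) hCmod hCalt
    (fun l h => by simpa only [hCdef] using h)
  have hf1 : ∀ l, l < k → f l < k := fun l hl => (hf l hl).1
  have hf2 : ∀ l, l < k → (p (f l)).1 = (p l).1 := by
    intro l hl
    have := (hf l hl).2.1
    rwa [Nat.mod_eq_of_lt hl] at this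
  have hf3 : ∀ l, l < k → (Even (f l) ↔ Even (l + 1)) := fun l hl => (hf l hl).2.2.1
  have hf4 : ∀ l, l < k → f (f l) = l := fun l hl => (hf l hl).2.2.2
  have hg1 : ∀ l, l < k → g l < k := fun l hl => (hg l hl).1
  have hg2 : ∀ l, l < k → (p (g l)).2 = (p l).2 := by
    intro l hl
    have := (hg l hl).2.1
    rwa [Nat.mod_eq_of_lt hl] at this
  have hg3 : ∀ l, l < k → (Even (g l) ↔ Even (l + 1)) := fun l hl => (hg l hl).2.2.1
  have hg4 : ∀ l, l < k → g (g l) = l := fun l hl => (hg l hl).2.2.2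
  set N : Fin m → Fin n → Fin q := fun i j =>
    if ∃ l, l < k ∧ p l = (i, j) ∧ Even l then b
    else if ∃ l, l < k ∧ p l = (i, j) then a else M i j with hNdef
  have hN : ∀ l, l < k → N (p l).1 (p l).2 = if Even l then b else a := by
    intro l hl
    by_cases he : Even l
    · rw [if_pos he]
      simp only [hNdef]
      rw [if_pos ⟨l, hl, rfl, he⟩]
    · rw [if_neg he]
      simp only [hNdef]
      rw [if_neg, if_pos ⟨l, hl, rfl⟩]
      rintro ⟨l', hl', hpl', he'⟩
      have : l' = l := hinj l' l hl' hl hpl'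
      exact he (this ▸ he')
  have hNoff : ∀ i j, (¬ ∃ l, l < k ∧ p l = (i, j)) → N i j = M i j := by
    intro i j h
    simp only [hNdef]
    rw [if_neg, if_neg h]
    rintro ⟨l, hl, hpl, _⟩
    exact h ⟨l, hl, hpl⟩
  have hrowcnt : ∀ (i : Fin m) (v : Fin q),
      (Finset.univ.filter fun j => N i j = v).card =
        (Finset.univ.filter fun j => M i j = v).card := by
    intro i v
    set τ : Fin n → Fin n := fun j =>
      if h : ∃ l, l < k ∧ p l = (i, j) then (p (f h.choose)).2 else j with hτdef
    have hτA : ∀ l, l < k → (p l).1 = i → τ (p l).2 = (p (f l)).2 := by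
      intro l hl hi
      have hex : ∃ l', l' < k ∧ p l' = (i, (p l).2) := ⟨l, hl, by rw [← hi]⟩
      have hch : hex.choose = l :=
        hinj _ _ hex.choose_spec.1 hl (by rw [hex.choose_spec.2, ← hi])
      simp only [hτdef]
      rw [dif_pos hex, hch]
    have hτB : ∀ j, (¬ ∃ l, l < k ∧ p l = (i, j)) → τ j = j := by
      intro j h
      simp only [hτdef]
      rw [dif_neg h]
    have hτinv : ∀ j, τ (τ j) = j := by
      intro j
      by_cases h : ∃ l, l < k ∧ p l = (i, j)
      · obtain ⟨l, hl, hpl⟩ := h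
        have hi' : (p l).1 = i := by rw [hpl]
        have hj' : (p l).2 = j := by rw [hpl]
        rw [← hj', hτA l hl hi',
          hτA (f l) (hf1 l hl) (by rw [hf2 l hl, hi']), hf4 l hl]
      · rw [hτB j h, hτB j h]
    have hMN : ∀ j, M i (τ j) = N i j := by
      intro j
      by_cases h : ∃ l, l < k ∧ p l = (i, j)
      · obtain ⟨l, hl, hpl⟩ := h
        have hi' : (p l).1 = i := by rw [hpl]
        have hj' : (p l).2 = j := by rw [hpl]
        rw [← hj', ← hi', hτA l hl hi', hN l hl]
        have e1 : M (p l).1 (p (f l)).2 = M (p (f l)).1 (p (f l)).2 := by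
          rw [hf2 l hl]
        rw [e1, Mval (f l) (hf1 l hl)]
        by_cases he : Even l
        · have hfe : ¬ Even (f l) := by
            rw [hf3 l hl, Nat.even_add_one]; exact not_not_intro he
          rw [if_pos he, if_neg hfe]
        · have hfe : Even (f l) := by
            rw [hf3 l hl, Nat.even_add_one]; exact he
          rw [if_neg he, if_pos hfe]
      · rw [hτB j h, hNoff i j h]
    apply Finset.card_bij' (fun j _ => τ j) (fun j _ => τ j)
    · intro j hj
      simp only [Finset.mem_filter, Finset.mem_univ, true_and] at hj ⊢
      rw [hMN j]; exact hj
    · intro j hj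
      simp only [Finset.mem_filter, Finset.mem_univ, true_and] at hj ⊢
      rw [← hMN (τ j), hτinv j]; exact hj
    · intro j _; exact hτinv j
    · intro j _; exact hτinv j
  have hcolcnt : ∀ (j : Fin n) (v : Fin q),
      (Finset.univ.filter fun i => N i j = v).card =
        (Finset.univ.filter fun i => M i j = v).card := by
    intro j v
    set ρ : Fin m → Fin m := fun i =>
      if h : ∃ l, l < k ∧ p l = (i, j) then (p (g h.choose)).1 else i with hρdef
    have hρA : ∀ l, l < k → (p l).2 = j → ρ (p l).1 = (p (g l)).1 := by
      intro l hl hj'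
      have hex : ∃ l', l' < k ∧ p l' = ((p l).1, j) := ⟨l, hl, by rw [← hj']⟩
      have hch : hex.choose = l :=
        hinj _ _ hex.choose_spec.1 hl (by rw [hex.choose_spec.2, ← hj'])
      simp only [hρdef]
      rw [dif_pos hex, hch]
    have hρB : ∀ i, (¬ ∃ l, l < k ∧ p l = (i, j)) → ρ i = i := by
      intro i h
      simp only [hρdef]
      rw [dif_neg h]
    have hρinv : ∀ i, ρ (ρ i) = i := by
      intro i
      by_cases h : ∃ l, l < k ∧ p l = (i, j)
      · obtain ⟨l, hl, hpl⟩ := h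
        have hi' : (p l).1 = i := by rw [hpl]
        have hj' : (p l).2 = j := by rw [hpl]
        rw [← hi', hρA l hl hj',
          hρA (g l) (hg1 l hl) (by rw [hg2 l hl, hj']), hg4 l hl]
      · rw [hρB i h, hρB i h]
    have hMN : ∀ i, M (ρ i) j = N i j := by
      intro i
      by_cases h : ∃ l, l < k ∧ p l = (i, j)
      · obtain ⟨l, hl, hpl⟩ := h
        have hi' : (p l).1 = i := by rw [hpl]
        have hj' : (p l).2 = j := by rw [hpl]
        rw [← hj', ← hi', hρA l hl hj', hN l hl]
        have e1 : M (p (g l)).1 (p l).2 = M (p (g l)).1 (p (g l)).2 := by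
          rw [hg2 l hl]
        rw [e1, Mval (g l) (hg1 l hl)]
        by_cases he : Even l
        · have hfe : ¬ Even (g l) := by
            rw [hg3 l hl, Nat.even_add_one]; exact not_not_intro he
          rw [if_pos he, if_neg hfe]
        · have hfe : Even (g l) := by
            rw [hg3 l hl, Nat.even_add_one]; exact he
          rw [if_neg he, if_pos hfe]
      · rw [hρB i h, hNoff i j h]
    apply Finset.card_bij' (fun i _ => ρ i) (fun i _ => ρ i)
    · intro i hi
      simp only [Finset.mem_filter, Finset.mem_univ, true_and] at hi ⊢
      rw [hMN i]; exact hi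
    · intro i hi
      simp only [Finset.mem_filter, Finset.mem_univ, true_and] at hi ⊢
      rw [← hMN (ρ i), hρinv i]; exact hi
    · intro i _; exact hρinv i
    · intro i _; exact hρinv i
  have hNM := hw N hrowcnt hcolcnt
  have h0 := hN 0 hk
  rw [if_pos Even.zero, hNM] at h0
  have h0' := Mval 0 hk
  rw [if_pos Even.zero] at h0'
  exact hab (h0'.symm.trans h0)
end
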